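/- Let b : ℝ → ℝ be continuous with b > 0 on (α, β), b(α) = b(β) = 0, and suppose the ODE γ' = b(γ) has unique solutions through every point. With F(x) = ∫_{x₀}^x dr/b(r), we have F(x) → −∞ as x → α⁺ and F(x) → +∞ as x → β⁻. -/

import Mathlib

open Set Filter

open Topology in

lemma bnd_deriv {f g : ℝ → ℝ} {a M L : ℝ} (haM : a < M)
    (h1 : ∀ t, M ≤ t → f t = L)
    (h2 : ∀ t ∈ Ioo a M, HasDerivAt f (g t) t)
    (h3 : Tendsto g (nhdsWithin M (Iio M)) (nhds 0))
    (h4 : Tendsto f (nhdsWithin M (Iio M)) (nhds L)) :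
    HasDerivAt f 0 M := by
  have hfM : f M = L := h1 M le_rfl
  rw [hasDerivAt_iff_tendsto]
  have key : ∀ ε > 0, ∀ᶠ s in nhds M, ‖s - M‖⁻¹ * ‖f s - f M - (s - M) • (0:ℝ)‖ ≤ ε := by
    intro ε hε
    have hev : {u | |g u| < ε} ∈ nhdsWithin M (Iio M) := by
      have : Tendsto (fun u => |g u|) (nhdsWithin M (Iio M)) (nhds 0) := by
        simpa using h3.abs
      have := (this.eventually (eventually_lt_nhds hε |>.mono (fun x hx => hx)))
      exact this
    obtain ⟨l, hl, hsub⟩ := mem_nhdsLT_iff_exists_Ioo_subset.1 hev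
    set a' := max a l with ha'
    have ha'M : a' < M := max_lt haM hl
    -- main estimate
    have main : ∀ s ∈ Ioo a' M, |f s - L| ≤ ε * (M - s) := by
      intro s hs
      have hstep : ∀ s' ∈ Ico s M, |f s' - f s| ≤ ε * (s' - s) := by
        intro s' hs'
        have hseg : ∀ x ∈ Icc s s', HasDerivWithinAt f (g x) (Icc s s') x := by
          intro x hx
          exact (h2 x ⟨lt_of_lt_of_le (lt_of_le_of_lt (le_max_left a l) hs.1) hx.1,
            lt_of_le_of_lt hx.2 hs'.2⟩).hasDerivWithinAt
        have hbound : ∀ x ∈ Icc s s', ‖g x‖ ≤ ε := by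
          intro x hx
          have : x ∈ Ioo l M := ⟨lt_of_le_of_lt (le_max_right a l) (lt_of_lt_of_le hs.1 hx.1),
            lt_of_le_of_lt hx.2 hs'.2⟩
          exact le_of_lt (hsub this)
        have := Convex.norm_image_sub_le_of_norm_hasDerivWithin_le hseg hbound
          (convex_Icc s s') (left_mem_Icc.2 hs'.1) (right_mem_Icc.2 hs'.1)
        simpa [abs_of_nonneg (sub_nonneg.2 hs'.1)] using this
      -- take limit s' → M⁻
      have hlim : Tendsto (fun s' => |f s' - f s|) (nhdsWithin M (Iio M)) (nhds (|L - f s|)) := by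
        exact ((h4.sub tendsto_const_nhds).abs)
      have hevle : ∀ᶠ s' in nhdsWithin M (Iio M), |f s' - f s| ≤ ε * (M - s) := by
        filter_upwards [Ioo_mem_nhdsLT_of_mem (⟨hs.2, le_refl M⟩ : M ∈ Ioc s M)] with s' hs'
        calc |f s' - f s| ≤ ε * (s' - s) := hstep s' ⟨le_of_lt hs'.1, hs'.2⟩
          _ ≤ ε * (M - s) := by nlinarith [hs'.2]
      have := le_of_tendsto hlim hevle
      calc |f s - L| = |L - f s| := abs_sub_comm _ _
        _ ≤ ε * (M - s) := this
    filter_upwards [Ioi_mem_nhds ha'M] with s hs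
    simp only [smul_zero, sub_zero, hfM]
    rcases le_or_gt M s with hMs | hsM
    · rw [h1 s hMs]
      simp [hε.le]
    · have h := main s ⟨hs, hsM⟩
      rw [Real.norm_eq_abs, Real.norm_eq_abs, abs_sub_comm s M, abs_of_pos (sub_pos.2 hsM)]
      rw [inv_mul_le_iff₀ (sub_pos.2 hsM)]
      calc |f s - L| ≤ ε * (M - s) := h
        _ = (M - s) * ε := mul_comm _ _
  -- conclude tendsto from the eventual bounds
  have : Tendsto (fun s => ‖s - M‖⁻¹ * ‖f s - f M - (s - M) • (0:ℝ)‖) (nhds M) (nhds 0) := by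
    rw [Metric.tendsto_nhds]
    intro ε hε
    filter_upwards [key (ε/2) (by linarith)] with s hs
    have h0 : 0 ≤ ‖s - M‖⁻¹ * ‖f s - f M - (s - M) • (0:ℝ)‖ :=
      mul_nonneg (inv_nonneg.2 (norm_nonneg _)) (norm_nonneg _)
    rw [Real.dist_eq, abs_of_nonneg (by simpa using h0)]
    calc _ ≤ ε/2 := by simpa using hs
      _ < ε := by linarith
  exact this

open Topology in
lemma key_blowup (b : ℝ → ℝ) (hb : Continuous b) (α β : ℝ) (hαβ : α < β)
    (hpos : ∀ x ∈ Ioo α β, 0 < b x) (hα : b α = 0) (hβ : b β = 0)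
    (huniq : ∀ γ₁ γ₂ : ℝ → ℝ,
      (∀ t, HasDerivAt γ₁ (b (γ₁ t)) t) → (∀ t, HasDerivAt γ₂ (b (γ₂ t)) t) →
      ∀ t₀, γ₁ t₀ = γ₂ t₀ → γ₁ = γ₂)
    (x₀ : ℝ) (hx₀ : x₀ ∈ Ioo α β)
    (F : ℝ → ℝ) (hF : ∀ x ∈ Ioo α β, F x = ∫ r in x₀..x, 1 / b r) :
    Tendsto F (nhdsWithin β (Iio β)) atTop := by
  have hcon : ContinuousOn (fun r => 1 / b r) (Ioo α β) :=
    ContinuousOn.div continuousOn_const hb.continuousOn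
      (fun x hx => (hpos x hx).ne')
  have hderiv : ∀ x ∈ Ioo α β, HasDerivAt F (1 / b x) x := by
    intro x hx
    have hsub : uIcc x₀ x ⊆ Ioo α β := Set.ordConnected_Ioo.uIcc_subset hx₀ hx
    have hint : IntervalIntegrable (fun r => 1 / b r) MeasureTheory.volume x₀ x :=
      (hcon.mono hsub).intervalIntegrable
    have hmeas := hcon.stronglyMeasurableAtFilter (μ := MeasureTheory.volume) isOpen_Ioo x hx
    have hca : ContinuousAt (fun r => 1 / b r) x :=
      ContinuousAt.div continuousAt_const hb.continuousAt (hpos x hx).ne'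
    have hG : HasDerivAt (fun u => ∫ r in x₀..u, 1 / b r) (1 / b x) x :=
      intervalIntegral.integral_hasDerivAt_right hint hmeas hca
    apply hG.congr_of_eventuallyEq
    filter_upwards [isOpen_Ioo.mem_nhds hx] with y hy
    exact hF y hy
  have hsm : StrictMonoOn F (Ioo α β) := by
    apply strictMonoOn_of_deriv_pos (convex_Ioo α β)
    · exact fun x hx => (hderiv x hx).continuousAt.continuousWithinAt
    · intro x hx
      rw [interior_Ioo] at hx
      rw [(hderiv x hx).deriv]
      exact div_pos one_pos (hpos x hx)
  by_contra hnot
  obtain ⟨K, hK⟩ : ∃ K, ∀ x ∈ Ioo α β, F x ≤ K := by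
    rw [tendsto_atTop] at hnot
    push_neg at hnot
    obtain ⟨K, hK⟩ := hnot
    simp only [← not_le] at hK
    refine ⟨K, fun x hx => ?_⟩
    have hmem : Ioo x β ∈ nhdsWithin β (Iio β) := Ioo_mem_nhdsLT_of_mem ⟨hx.2, le_refl β⟩
    obtain ⟨y, hy1, hy2⟩ := (hK.and_eventually (eventually_of_mem hmem (fun z hz => hz))).exists
    have hyI : y ∈ Ioo α β := ⟨lt_trans hx.1 hy2.1, hy2.2⟩
    have : F x < F y := hsm hx hyI hy2.1
    linarith [not_le.1 hy1]
  -- supremum of the image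
  set Fs := F '' Ioo α β with hFsdef
  have hFsne : Fs.Nonempty := ⟨F x₀, ⟨x₀, hx₀, rfl⟩⟩
  have hFsbdd : BddAbove Fs := ⟨K, by rintro _ ⟨x, hx, rfl⟩; exact hK x hx⟩
  set M := sSup Fs with hMdef
  have hlt : ∀ x ∈ Ioo α β, F x < M := by
    intro x hx
    have hy : (x + β) / 2 ∈ Ioo α β := ⟨lt_trans hx.1 (by linarith [hx.2]), by linarith [hx.2]⟩
    have h1 : F x < F ((x + β) / 2) := hsm hx hy (by linarith [hx.2])
    exact lt_of_lt_of_le h1 (le_csSup hFsbdd ⟨_, hy, rfl⟩)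
  -- the solution candidate
  set S : ℝ → Set ℝ := fun t => {x ∈ Ioo α β | F x ≤ t} with hSdef
  set γ : ℝ → ℝ := fun t => sSup (insert α (S t)) with hγdef
  have hSbdd : ∀ t, BddAbove (insert α (S t)) := by
    intro t
    refine ⟨β, ?_⟩
    rintro z hz
    rcases mem_insert_iff.1 hz with rfl | hz'
    · exact hαβ.le
    · exact hz'.1.2.le
  have hγleβ : ∀ t, γ t ≤ β := by
    intro t
    apply csSup_le (insert_nonempty _ _)
    rintro z hz
    rcases mem_insert_iff.1 hz with rfl | hz'
    · exact hαβ.le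
    · exact hz'.1.2.le
  have hαleγ : ∀ t, α ≤ γ t := fun t => le_csSup (hSbdd t) (mem_insert _ _)
  have hγF : ∀ x ∈ Ioo α β, γ (F x) = x := by
    intro x hx
    apply IsGreatest.csSup_eq
    constructor
    · exact mem_insert_of_mem _ ⟨hx, le_rfl⟩
    · intro z hz
      rcases mem_insert_iff.1 hz with rfl | ⟨hzI, hzF⟩
      · exact hx.1.le
      · by_contra h
        push_neg at h
        exact absurd hzF (not_le.2 (hsm hx hzI h))
  have hγM : ∀ t, M ≤ t → γ t = β := by
    intro t ht
    have h2 : sSup (Ioo α β) ≤ γ t := by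
      apply csSup_le_csSup (hSbdd t) (nonempty_Ioo.2 hαβ)
      exact fun x hx => mem_insert_of_mem _ ⟨hx, le_trans (hlt x hx).le ht⟩
    rw [csSup_Ioo hαβ] at h2
    exact le_antisymm (hγleβ t) h2
  -- the inverse property
  have hkey : ∀ t, (S t).Nonempty → t < M → γ t ∈ Ioo α β ∧ F (γ t) = t := by
    rintro t ⟨x₁, hx₁⟩ htM
    obtain ⟨fx₂, hfx₂mem, hfx₂⟩ := exists_lt_of_lt_csSup hFsne htM
    obtain ⟨x₂, hx₂, rfl⟩ := hfx₂mem
    have hub : ∀ z ∈ insert α (S t), z ≤ x₂ := by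
      intro z hz
      rcases mem_insert_iff.1 hz with rfl | ⟨hzI, hzF⟩
      · exact hx₂.1.le
      · by_contra h
        push_neg at h
        exact absurd (le_trans (hsm.monotoneOn hx₂ hzI h.le) hzF) (not_le.2 hfx₂)
    have hle : γ t ≤ x₂ := csSup_le (insert_nonempty _ _) hub
    have hge : x₁ ≤ γ t := le_csSup (hSbdd t) (mem_insert_of_mem _ hx₁)
    have hγI : γ t ∈ Ioo α β := ⟨lt_of_lt_of_le hx₁.1.1 hge, lt_of_le_of_lt hle hx₂.2⟩
    refine ⟨hγI, le_antisymm ?_ ?_⟩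
    · by_contra h
      push_neg at h
      have hcF : ContinuousAt F (γ t) := (hderiv _ hγI).continuousAt
      have hev : ∀ᶠ z in nhds (γ t), t < F z := hcF.eventually (eventually_gt_nhds h)
      obtain ⟨δ, hδ, hball⟩ := Metric.eventually_nhds_iff.1 hev
      set δ' := min δ (γ t - α) with hδ'
      have hδ'pos : 0 < δ' := lt_min hδ (by linarith [hγI.1])
      obtain ⟨z, hzmem, hz⟩ := exists_lt_of_lt_csSup (insert_nonempty _ _)
        (show γ t - δ' < γ t by linarith)
      rcases mem_insert_iff.1 hzmem with rfl | ⟨hzI, hzF⟩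
      · have : δ' ≤ γ t - z := min_le_right _ _
        linarith
      · have hzle : z ≤ γ t := le_csSup (hSbdd t) hzmem
        have hd : dist z (γ t) < δ := by
          rw [Real.dist_eq, abs_of_nonpos (by linarith)]
          have : δ' ≤ δ := min_le_left _ _
          linarith
        exact absurd hzF (not_le.2 (hball hd))
    · by_contra h
      push_neg at h
      have hcF : ContinuousAt F (γ t) := (hderiv _ hγI).continuousAt
      have hev : ∀ᶠ z in nhds (γ t), F z < t := hcF.eventually (eventually_lt_nhds h)
      obtain ⟨δ, hδ, hball⟩ := Metric.eventually_nhds_iff.1 hev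
      set z := min (γ t + δ / 2) ((γ t + β) / 2) with hz
      have hzgt : γ t < z := lt_min (by linarith) (by linarith [hγI.2])
      have hzβ : z < β := lt_of_le_of_lt (min_le_right _ _) (by linarith [hγI.2])
      have hzI : z ∈ Ioo α β := ⟨lt_trans hγI.1 hzgt, hzβ⟩
      have hd : dist z (γ t) < δ := by
        rw [Real.dist_eq, abs_of_pos (by linarith)]
        have : z ≤ γ t + δ / 2 := min_le_left _ _
        linarith
      have : z ∈ S t := ⟨hzI, (hball hd).le⟩
      exact absurd (le_csSup (hSbdd t) (mem_insert_of_mem _ this)) (not_le.2 hzgt)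
  -- continuity of γ at interior points
  have hγcont : ∀ t, (S t).Nonempty → t < M → ContinuousAt γ t := by
    intro t hne htM
    obtain ⟨hγI, hFγ⟩ := hkey t hne htM
    rw [Metric.continuousAt_iff]
    intro ε hε
    set c := γ t with hc
    set ε' := min (ε / 2) (min ((c - α) / 2) ((β - c) / 2)) with hε'
    have hε'pos : 0 < ε' :=
      lt_min (by linarith) (lt_min (by linarith [hγI.1]) (by linarith [hγI.2]))
    have hε'2 : ε' ≤ (c - α) / 2 := le_trans (min_le_right _ _) (min_le_left _ _)
    have hε'3 : ε' ≤ (β - c) / 2 := le_trans (min_le_right _ _) (min_le_right _ _)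
    have hx₁ : c - ε' ∈ Ioo α β := ⟨by linarith [hγI.1], by linarith [hγI.2]⟩
    have hx₂ : c + ε' ∈ Ioo α β := ⟨by linarith [hγI.1], by linarith [hγI.2]⟩
    have hF₁ : F (c - ε') < t := by rw [← hFγ]; exact hsm hx₁ hγI (by linarith)
    have hF₂ : t < F (c + ε') := by rw [← hFγ]; exact hsm hγI hx₂ (by linarith)
    refine ⟨min (t - F (c - ε')) (F (c + ε') - t), lt_min (by linarith) (by linarith), ?_⟩
    intro y hy
    rw [Real.dist_eq] at hy ⊢
    have hy' := abs_lt.1 hy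
    have hy1 : F (c - ε') < y := by
      have := min_le_left (t - F (c - ε')) (F (c + ε') - t)
      linarith [hy'.1]
    have hy2 : y < F (c + ε') := by
      have := min_le_right (t - F (c - ε')) (F (c + ε') - t)
      linarith [hy'.2]
    have hge : c - ε' ≤ γ y := le_csSup (hSbdd y) (mem_insert_of_mem _ ⟨hx₁, hy1.le⟩)
    have hle : γ y ≤ c + ε' := by
      apply csSup_le (insert_nonempty _ _)
      intro z hz
      rcases mem_insert_iff.1 hz with rfl | ⟨hzI, hzF⟩
      · linarith [hγI.1]
      · by_contra hcon'
        push_neg at hcon'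
        exact absurd (le_trans (hsm.monotoneOn hx₂ hzI hcon'.le) hzF) (not_le.2 hy2)
    rw [abs_lt]
    constructor <;> [skip; skip] <;> [linarith [hε'pos, min_le_left (ε/2) (min ((c - α) / 2) ((β - c) / 2))]; linarith [min_le_left (ε/2) (min ((c - α) / 2) ((β - c) / 2))]]
  have hγmono : Monotone γ := by
    intro s t hst
    exact csSup_le_csSup (hSbdd t) (insert_nonempty _ _)
      (insert_subset_insert (fun x hx => ⟨hx.1, hx.2.trans hst⟩))
  -- limit at M from the left
  have hγtoβ : Tendsto γ (nhdsWithin M (Iio M)) (nhds β) := by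
    rw [tendsto_order]
    constructor
    · intro c hc
      set x' := (max c α + β) / 2 with hx'
      have hx'I : x' ∈ Ioo α β :=
        ⟨by have := le_max_right c α; simp only [hx']; linarith, by have := max_lt hc hαβ; simp only [hx']; linarith⟩
      have hcx' : c < x' := by have := le_max_left c α; simp only [hx']; linarith
      filter_upwards [Ioo_mem_nhdsLT_of_mem (⟨hlt x' hx'I, le_refl M⟩ : M ∈ Ioc (F x') M)] with u hu
      exact lt_of_lt_of_le hcx' (le_csSup (hSbdd u) (mem_insert_of_mem _ ⟨hx'I, hu.1.le⟩))
    · intro c hc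
      filter_upwards with u
      exact lt_of_le_of_lt (hγleβ u) hc
  -- main interior derivative
  have d_main : ∀ t, (S t).Nonempty → t < M → HasDerivAt γ (b (γ t)) t := by
    intro t hne htM
    obtain ⟨hγI, hFγ⟩ := hkey t hne htM
    obtain ⟨x₁, hx₁⟩ := hne
    set x₁' := (α + x₁) / 2 with hx₁'
    have hx₁'I : x₁' ∈ Ioo α β := ⟨by simp only [hx₁']; linarith [hx₁.1.1], by simp only [hx₁']; linarith [hx₁.1.1, hx₁.1.2]⟩
    have hFx₁' : F x₁' < t := lt_of_lt_of_le (hsm hx₁'I hx₁.1 (by simp only [hx₁']; linarith [hx₁.1.1])) hx₁.2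
    have hev : ∀ᶠ y in nhds t, F (γ y) = y := by
      filter_upwards [Ioo_mem_nhds hFx₁' htM] with y hy
      exact (hkey y ⟨x₁', hx₁'I, hy.1.le⟩ hy.2).2
    have hres := HasDerivAt.of_local_left_inverse (hγcont t ⟨x₁, hx₁⟩ htM)
      (hderiv (γ t) hγI) (one_div_ne_zero (hpos _ hγI).ne') hev
    simpa [one_div] using hres
  -- derivative everywhere below M
  have dAll_ltM : ∀ t, t < M → HasDerivAt γ (b (γ t)) t := by
    by_cases hbb : BddBelow Fs
    · set m := sInf Fs with hmdef
      have hstrm : ∀ x ∈ Ioo α β, m < F x := by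
        intro x hx
        set x'' := (α + x) / 2 with hx''
        have hx''I : x'' ∈ Ioo α β := ⟨by simp only [hx'']; linarith [hx.1], by simp only [hx'']; linarith [hx.1, hx.2]⟩
        exact lt_of_le_of_lt (csInf_le hbb ⟨x'', hx''I, rfl⟩) (hsm hx''I hx (by simp only [hx'']; linarith [hx.1]))
      have hSne : ∀ t, m < t → (S t).Nonempty := by
        intro t ht
        obtain ⟨y, ⟨x, hx, rfl⟩, hy⟩ := exists_lt_of_csInf_lt hFsne ht
        exact ⟨x, hx, hy.le⟩
      have hγeqα : ∀ t, t ≤ m → γ t = α := by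
        intro t ht
        have hSempty : S t = ∅ := by
          ext x
          simp only [mem_empty_iff_false, iff_false]
          rintro ⟨hxI, hxF⟩
          exact absurd (le_trans hxF ht) (not_le.2 (hstrm x hxI))
        rw [hγdef]
        simp only [hSempty, insert_empty_eq]
        exact csSup_singleton α
      have hmM : m < M := lt_trans (hstrm x₀ hx₀) (hlt x₀ hx₀)
      have hγtoα : Tendsto γ (nhdsWithin m (Ioi m)) (nhds α) := by
        rw [tendsto_order]
        constructor
        · intro c hc
          filter_upwards with u
          exact lt_of_lt_of_le hc (hαleγ u)
        · intro c hc
          set x' := (α + min c β) / 2 with hx'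
          have hαc : α < min c β := lt_min hc hαβ
          have hx'I : x' ∈ Ioo α β := ⟨by simp only [hx']; linarith, by have := min_le_right c β; simp only [hx']; linarith⟩
          have hx'c : x' < c := by have := min_le_left c β; simp only [hx']; linarith
          filter_upwards [Ioo_mem_nhdsGT_of_mem (⟨le_refl m, hstrm x' hx'I⟩ : m ∈ Ico m (F x'))] with u hu
          have hle : γ u ≤ x' := by
            apply csSup_le (insert_nonempty _ _)
            intro z hz
            rcases mem_insert_iff.1 hz with rfl | ⟨hzI, hzF⟩
            · exact hx'I.1.le
            · by_contra hcon'
              push_neg at hcon'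
              exact absurd (le_trans (hsm.monotoneOn hx'I hzI hcon'.le) hzF) (not_le.2 hu.2)
          linarith
      intro t htM
      rcases lt_trichotomy t m with h | rfl | h
      · have hloc : γ =ᶠ[nhds t] fun _ => α := by
          filter_upwards [Iio_mem_nhds h] with y hy
          exact hγeqα y (le_of_lt hy)
        have hd := (hasDerivAt_const t α).congr_of_eventuallyEq hloc
        have hγt : γ t = α := hγeqα t h.le
        rw [hγt, hα]
        exact hd
      · -- t = m : use reflected boundary lemma
        have hneg : Tendsto (fun s : ℝ => -s) (nhdsWithin (-m) (Iio (-m))) (nhdsWithin m (Ioi m)) := by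
          apply Tendsto.inf
          · have : Tendsto (fun s : ℝ => -s) (nhds (-m)) (nhds (-(-m))) := (continuous_neg.tendsto _)
            simpa using this
          · rw [tendsto_principal_principal]
            intro s hs
            simp only [mem_Iio] at hs
            simp only [mem_Ioi]
            linarith
        have h4' : Tendsto (fun s => γ (-s)) (nhdsWithin (-m) (Iio (-m))) (nhds α) :=
          hγtoα.comp hneg
        have hrefl : HasDerivAt (fun s => γ (-s)) 0 (-m) := by
          apply bnd_deriv (a := -M) (g := fun s => b (γ (-s)) * (-1)) (L := α) (by linarith)
          · intro s hs
            exact hγeqα (-s) (by linarith)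
          · intro s hs
            simp only [mem_Ioo] at hs
            have hsm' : m < -s := by linarith
            have hsM' : -s < M := by linarith
            have h1 : HasDerivAt γ (b (γ (-s))) (-s) := d_main (-s) (hSne _ hsm') hsM'
            have := h1.comp s (hasDerivAt_neg s)
            simpa [Function.comp_def] using this
          · have hbc : Tendsto (fun s => b (γ (-s))) (nhdsWithin (-m) (Iio (-m))) (nhds (b α)) :=
              (hb.tendsto α).comp h4'
            have := hbc.mul_const (-1)
            rw [hα] at this
            simpa using this
          · exact h4'
        have hcomp := hrefl.comp m (hasDerivAt_neg m)
        simp only [Function.comp_def, neg_neg, zero_mul] at hcomp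
        have hγm : γ m = α := hγeqα m le_rfl
        rw [hγm, hα]
        exact hcomp
      · exact d_main t (hSne t h) htM
    · intro t htM
      obtain ⟨y, ⟨x, hxI, rfl⟩, hy⟩ := not_bddBelow_iff.1 hbb t
      exact d_main t ⟨x, hxI, hy.le⟩ htM
  -- derivative everywhere
  have dAll : ∀ t, HasDerivAt γ (b (γ t)) t := by
    intro t
    rcases lt_trichotomy t M with h | rfl | h
    · exact dAll_ltM t h
    · have hd : HasDerivAt γ 0 M := by
        apply bnd_deriv (a := M - 1) (g := fun s => b (γ s)) (L := β) (by linarith)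
        · exact fun s hs => hγM s hs
        · exact fun s hs => dAll_ltM s hs.2
        · have := (hb.tendsto β).comp hγtoβ
          rw [hβ] at this
          exact this
        · exact hγtoβ
      rw [hγM M le_rfl, hβ]
      exact hd
    · have hloc : γ =ᶠ[nhds t] fun _ => β := by
        filter_upwards [Ioi_mem_nhds h] with y hy
        exact hγM y hy.le
      have hd := (hasDerivAt_const t β).congr_of_eventuallyEq hloc
      rw [hγM t h.le, hβ]
      exact hd
  -- final contradiction
  have hconst : ∀ s, HasDerivAt (fun _ : ℝ => β) (b ((fun _ : ℝ => β) s)) s := by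
    intro s
    simpa [hβ] using hasDerivAt_const s β
  have heq := huniq γ (fun _ => β) dAll hconst M (hγM M le_rfl)
  have hcontra : γ (F x₀) = β := by rw [heq]
  rw [hγF x₀ hx₀] at hcontra
  exact absurd hcontra (ne_of_lt hx₀.2)

open Topology in
theorem F_blows_up
    (b : ℝ → ℝ) (hb : Continuous b) (α β : ℝ) (hαβ : α < β)
    (hpos : ∀ x ∈ Ioo α β, 0 < b x) (hα : b α = 0) (hβ : b β = 0)
    (huniq : ∀ γ₁ γ₂ : ℝ → ℝ,
      (∀ t, HasDerivAt γ₁ (b (γ₁ t)) t) → (∀ t, HasDerivAt γ₂ (b (γ₂ t)) t) →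
      ∀ t₀, γ₁ t₀ = γ₂ t₀ → γ₁ = γ₂)
    (x₀ : ℝ) (hx₀ : x₀ ∈ Ioo α β)
    (F : ℝ → ℝ) (hF : ∀ x ∈ Ioo α β, F x = ∫ r in x₀..x, 1 / b r) :
    Tendsto F (nhdsWithin α (Ioi α)) atBot ∧
    Tendsto F (nhdsWithin β (Iio β)) atTop := by
  constructor
  · -- α side via reflection
    set b' : ℝ → ℝ := fun x => b (-x) with hb'def
    have hb' : Continuous b' := hb.comp continuous_neg
    have hpos' : ∀ x ∈ Ioo (-β) (-α), 0 < b' x := by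
      intro x hx
      exact hpos (-x) ⟨by linarith [hx.2], by linarith [hx.1]⟩
    have huniq' : ∀ γ₁ γ₂ : ℝ → ℝ,
        (∀ t, HasDerivAt γ₁ (b' (γ₁ t)) t) → (∀ t, HasDerivAt γ₂ (b' (γ₂ t)) t) →
        ∀ t₀, γ₁ t₀ = γ₂ t₀ → γ₁ = γ₂ := by
      intro γ₁ γ₂ h1 h2 t₀ h0
      have hδ : ∀ (γ : ℝ → ℝ), (∀ t, HasDerivAt γ (b' (γ t)) t) →
          ∀ t, HasDerivAt (fun s => -γ (-s)) (b (-γ (-t))) t := by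
        intro γ hγ t
        have hc := (hγ (-t)).comp t (hasDerivAt_neg t)
        have hn := hc.neg
        simp only [Function.comp_def] at hn
        have : -(b' (γ (-t)) * -1) = b (-γ (-t)) := by
          simp [hb'def]
        rw [this] at hn
        exact hn
      have heq := huniq (fun s => -γ₁ (-s)) (fun s => -γ₂ (-s)) (hδ γ₁ h1) (hδ γ₂ h2)
        (-t₀) (by simp [h0])
      funext t
      have := congrFun heq (-t)
      simp only [neg_neg] at this
      linarith [this]
    have hx₀' : -x₀ ∈ Ioo (-β) (-α) := ⟨by linarith [hx₀.2], by linarith [hx₀.1]⟩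
    set F' : ℝ → ℝ := fun x => -F (-x) with hF'def
    have hF' : ∀ x ∈ Ioo (-β) (-α), F' x = ∫ r in (-x₀)..x, 1 / b' r := by
      intro x hx
      have hxI : -x ∈ Ioo α β := ⟨by linarith [hx.2], by linarith [hx.1]⟩
      have h1 : (∫ r in (-x₀)..x, 1 / b' r) = ∫ r in (-x)..x₀, 1 / b r := by
        simpa using intervalIntegral.integral_comp_neg (a := -x₀) (b := x) (fun r => 1 / b r)
      rw [h1, intervalIntegral.integral_symm, hF'def]
      simp only [neg_inj]
      exact hF (-x) hxI
    have hmain := key_blowup b' hb' (-β) (-α) (by linarith) hpos'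
      (by simp [hb'def, hβ]) (by simp [hb'def, hα]) huniq' (-x₀) hx₀' F' hF'
    -- transfer back
    have hneg : Tendsto (fun x : ℝ => -x) (nhdsWithin α (Ioi α)) (nhdsWithin (-α) (Iio (-α))) := by
      apply Tendsto.inf
      · have : Tendsto (fun x : ℝ => -x) (nhds α) (nhds (-α)) := (continuous_neg.tendsto _)
        exact this
      · rw [tendsto_principal_principal]
        intro x hx
        simp only [mem_Ioi] at hx
        simp only [mem_Iio]
        linarith
    have hcomp : Tendsto (fun x => F' (-x)) (nhdsWithin α (Ioi α)) atTop := hmain.comp hneg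
    have hcomp2 : Tendsto (fun x => -F x) (nhdsWithin α (Ioi α)) atTop := by
      apply hcomp.congr
      intro x
      simp [hF'def]
    exact tendsto_neg_atTop_iff.1 hcomp2
  · exact key_blowup b hb α β hαβ hpos hα hβ huniq x₀ hx₀ F hF
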